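/- For any u ∈ (0,1), the probability P_θ{ĥθ ≥ (n−1+u)T | D ≥ 1} that the equation F(y;θ'|D≥1) = u has no solution in θ' at y = ĥθ lies strictly between 0 and 1−u. -/

import Mathlib

open Filter Set

/-- CDF of the gamma distribution with integer shape `d ≥ 1` and scale 1
(equal to 0 for x ≤ 0). -/
noncomputable def gammaCDF (x : ℝ) (d : ℕ) : ℝ :=
  (∫ u in (0:ℝ)..(max x 0), u ^ (d - 1) * Real.exp (-u)) / (Nat.factorial (d - 1))

/-- P_θ(D ≥ d₀) where D ~ Binomial(n, 1 − e^{−T/θ}). -/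
noncomputable def probDge (n d0 : ℕ) (T θ : ℝ) : ℝ :=
  ∑ j ∈ Finset.Icc d0 n,
    (n.choose j : ℝ) * (1 - Real.exp (-T / θ)) ^ j * Real.exp (-((n:ℝ) - j) * T / θ)

/-- The conditional CDF F(y;θ | D ≥ d₀) of the MLE of the exponential mean under
type-I censoring at time T with n items (Bartholomew's formula). -/
noncomputable def condCDF_MLE (n d0 : ℕ) (T y θ : ℝ) : ℝ :=
  (∑ d ∈ Finset.Icc d0 n, ∑ ν ∈ Finset.range (d + 1),
      (-1:ℝ) ^ ν * (n.choose d) * (d.choose ν) * Real.exp (-(((n:ℝ) - d + ν)) * T / θ) *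
        gammaCDF ((d * y - ((n:ℝ) - d + ν) * T) / θ) d) / probDge n d0 T θ

section Aux

lemma fwdDiff_iter_pow_eq_zero (h : ℝ) : ∀ k d : ℕ, k < d →
    (fwdDiff h)^[d] (fun x : ℝ => x ^ k) = 0 := by
  intro k
  induction k using Nat.strong_induction_on with
  | _ k IH =>
    intro d hd
    obtain ⟨e, rfl⟩ : ∃ e, d = e + 1 := ⟨d - 1, by omega⟩
    rw [Function.iterate_succ_apply]
    have h1 : fwdDiff h (fun x : ℝ => x ^ k)
        = ∑ j ∈ Finset.range k, ((k.choose j : ℝ) * h ^ (k - j)) • (fun x : ℝ => x ^ j) := by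
      funext x
      simp only [fwdDiff, Finset.sum_apply, Pi.smul_apply, smul_eq_mul]
      rw [add_pow]
      rw [Finset.sum_range_succ]
      simp [mul_comm, mul_assoc, mul_left_comm]
    rw [h1, fwdDiff_iter_finset_sum]
    refine Finset.sum_eq_zero fun j hj => ?_
    rw [fwdDiff_iter_const_smul,
      IH j (Finset.mem_range.mp hj) e (by have := Finset.mem_range.mp hj; omega)]
    simp

lemma alt_sum_choose_pow (c : ℝ) {k d : ℕ} (hkd : k < d) :
    ∑ ν ∈ Finset.range (d+1), (-1:ℝ)^ν * (d.choose ν : ℝ) * (c - ν)^k = 0 := by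
  have h0 := fwdDiff_iter_eq_sum_shift (-1 : ℝ) (fun x : ℝ => x ^ k) d c
  rw [fwdDiff_iter_pow_eq_zero (-1:ℝ) k d hkd] at h0
  simp only [Pi.zero_apply, nsmul_eq_mul, mul_neg_one, zsmul_eq_mul] at h0
  have h1 : ∑ ν ∈ Finset.range (d+1),
      (-1:ℝ)^d * ((((-1:ℤ)^(d-ν) * (d.choose ν) : ℤ) : ℝ) * (c + -(ν:ℝ))^k) = 0 := by
    rw [← Finset.mul_sum, ← h0, mul_zero]
  rw [← h1]
  refine Finset.sum_congr rfl fun ν hν => ?_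
  have hν' : ν ≤ d := by have := Finset.mem_range.mp hν; omega
  have hs : (-1:ℝ)^(d-ν) * (-1:ℝ)^ν = (-1:ℝ)^d := by
    rw [← pow_add, Nat.sub_add_cancel hν']
  have hs2 : (-1:ℝ)^d * (-1:ℝ)^(d-ν) = (-1:ℝ)^ν := by
    rw [← hs, mul_comm ((-1:ℝ)^(d-ν)), mul_assoc, ← pow_add, ← two_mul, pow_mul,
      neg_one_sq, one_pow, mul_one]
  push_cast
  rw [sub_eq_add_neg]
  calc (-1:ℝ)^ν * (d.choose ν : ℝ) * (c + -(ν:ℝ))^k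
      = ((-1:ℝ)^d * (-1:ℝ)^(d-ν)) * (d.choose ν : ℝ) * (c + -(ν:ℝ))^k := by rw [hs2]
    _ = (-1:ℝ)^d * ((-1:ℝ)^(d-ν) * (d.choose ν : ℝ) * (c + -(ν:ℝ))^k) := by ring

lemma sum_deriv_aux (m : ℕ) (t : ℝ) :
    ∑ k ∈ Finset.range (m+1), ((m.factorial : ℝ) / k.factorial) * ((k:ℝ) * t ^ (k-1))
      = ∑ k ∈ Finset.range m, ((m.factorial : ℝ) / k.factorial) * t ^ k := by
  rw [Finset.sum_range_succ']
  simp only [Nat.cast_zero, zero_mul, mul_zero, add_zero]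
  refine Finset.sum_congr rfl fun k _ => ?_
  have hk : (k.factorial : ℝ) ≠ 0 := Nat.cast_ne_zero.mpr k.factorial_ne_zero
  have hk1 : ((k+1).factorial : ℝ) = ((k:ℝ)+1) * k.factorial := by
    rw [Nat.factorial_succ]; push_cast; ring
  have h2 : ((m.factorial : ℝ) / (k+1).factorial) * ((k:ℝ)+1) = (m.factorial : ℝ) / k.factorial := by
    rw [hk1]; field_simp
  simp only [Nat.add_sub_cancel, Nat.cast_add, Nat.cast_one]
  rw [← h2]; ring

lemma integral_pow_mul_exp_neg (m : ℕ) (x : ℝ) :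
    ∫ t in (0:ℝ)..x, t ^ m * Real.exp (-t)
      = (m.factorial : ℝ)
        - (∑ k ∈ Finset.range (m+1), ((m.factorial : ℝ) / k.factorial) * x ^ k) * Real.exp (-x) := by
  set F : ℝ → ℝ := fun t => -(∑ k ∈ Finset.range (m+1), ((m.factorial : ℝ) / k.factorial) * t ^ k) * Real.exp (-t) with hF
  have hderiv : ∀ t : ℝ, HasDerivAt F (t ^ m * Real.exp (-t)) t := by
    intro t
    have hexp : HasDerivAt (fun t : ℝ => Real.exp (-t)) (-Real.exp (-t)) t := by
      simpa using (hasDerivAt_neg t).exp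
    have hS : HasDerivAt (fun t : ℝ => ∑ k ∈ Finset.range (m+1), ((m.factorial : ℝ) / k.factorial) * t ^ k)
        (∑ k ∈ Finset.range (m+1), ((m.factorial : ℝ) / k.factorial) * ((k:ℝ) * t ^ (k-1))) t := by
      refine HasDerivAt.fun_sum fun k _ => ?_
      exact (hasDerivAt_pow k t).const_mul _
    have := ((hS.fun_neg).fun_mul hexp)
    refine this.congr_deriv ?_
    rw [sum_deriv_aux]
    have hm : ∑ k ∈ Finset.range (m+1), ((m.factorial : ℝ) / k.factorial) * t ^ k
        = (∑ k ∈ Finset.range m, ((m.factorial : ℝ) / k.factorial) * t ^ k) + t ^ m := by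
      rw [Finset.sum_range_succ, div_self (Nat.cast_ne_zero.mpr m.factorial_ne_zero), one_mul]
    rw [hm]; ring
  have hcont : IntervalIntegrable (fun t : ℝ => t ^ m * Real.exp (-t)) MeasureTheory.volume 0 x := by
    apply Continuous.intervalIntegrable
    continuity
  have := intervalIntegral.integral_eq_sub_of_hasDerivAt (fun t _ => hderiv t) hcont
  rw [this, hF]
  have h0 : (∑ k ∈ Finset.range (m+1), ((m.factorial : ℝ) / k.factorial) * (0:ℝ) ^ k)
      = (m.factorial : ℝ) := by
    rw [Finset.sum_range_succ']
    simp
  simp only [neg_zero, Real.exp_zero, mul_one, h0]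
  ring

lemma gammaCDF_eq {x : ℝ} (hx : 0 ≤ x) {d : ℕ} (hd : 1 ≤ d) :
    gammaCDF x d = 1 - Real.exp (-x) * ∑ k ∈ Finset.range d, x ^ k / k.factorial := by
  obtain ⟨m, rfl⟩ : ∃ m, d = m + 1 := ⟨d - 1, by omega⟩
  rw [gammaCDF, max_eq_left hx, Nat.add_sub_cancel, integral_pow_mul_exp_neg]
  have hm : (m.factorial : ℝ) ≠ 0 := Nat.cast_ne_zero.mpr m.factorial_ne_zero
  have hsum : (∑ k ∈ Finset.range (m+1), ((m.factorial : ℝ) / k.factorial) * x ^ k)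
      = (m.factorial : ℝ) * ∑ k ∈ Finset.range (m+1), x ^ k / k.factorial := by
    rw [Finset.mul_sum]
    refine Finset.sum_congr rfl fun k _ => ?_
    field_simp
  rw [hsum]
  field_simp

lemma gammaCDF_nonpos {x : ℝ} (hx : x ≤ 0) (d : ℕ) : gammaCDF x d = 0 := by
  rw [gammaCDF, max_eq_right hx, intervalIntegral.integral_same, zero_div]

end Aux

section Main

variable {n : ℕ} {T θ u : ℝ}

lemma numerator_eq (hn : 1 ≤ n) (hT : 0 < T) (hθ : 0 < θ) (hu0 : 0 < u) (hu1 : u < 1) :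
    (∑ d ∈ Finset.Icc 1 n, ∑ ν ∈ Finset.range (d + 1),
      (-1:ℝ) ^ ν * (n.choose d) * (d.choose ν) * Real.exp (-(((n:ℝ) - d + ν)) * T / θ) *
        gammaCDF (((d:ℝ) * (((n:ℝ) - 1 + u) * T) - ((n:ℝ) - d + ν) * T) / θ) d)
    = probDge n 1 T θ
      - (n:ℝ) * (Real.exp (-((n:ℝ) - 1 + u) * T / θ) - Real.exp (-(n:ℝ) * T / θ)) := by
  have ha : 0 < T / θ := div_pos hT hθ
  set a : ℝ := T / θ with ha'
  set c : ℕ → ℝ := fun d => (d:ℝ) * ((n:ℝ) - 1 + u) - ((n:ℝ) - (d:ℝ)) with hc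
  set X : ℕ → ℕ → ℝ :=
    fun d ν => (((d:ℝ)) * (((n:ℝ) - 1 + u) * T) - ((n:ℝ) - (d:ℝ) + (ν:ℝ)) * T) / θ with hXdef
  have hX : ∀ d ν : ℕ, X d ν = (c d - ν) * a := by
    intro d ν
    simp only [hXdef, hc, ha']
    field_simp
    ring
  set A : ℕ → ℕ → ℝ := fun d ν =>
    (-1:ℝ) ^ ν * (n.choose d) * (d.choose ν) * Real.exp (-(((n:ℝ) - d + ν)) * T / θ) with hA
  set t' : ℕ → ℕ → ℝ := fun d ν =>
    A d ν * (1 - Real.exp (-(X d ν)) * ∑ k ∈ Finset.range d, (X d ν) ^ k / k.factorial) with ht'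
  -- positivity of X off (1,1)
  have hXpos : ∀ d, 1 ≤ d → d ≤ n → ∀ ν ≤ d, ¬(d = 1 ∧ ν = 1) → 0 < X d ν := by
    intro d hd1 hdn ν hν hne
    rw [hX]
    refine mul_pos ?_ ha
    have hdn' : (d:ℝ) ≤ n := by exact_mod_cast hdn
    have hν' : (ν:ℝ) ≤ d := by exact_mod_cast hν
    rcases Nat.lt_or_ge d 2 with hd2 | hd2
    · interval_cases d
      · interval_cases ν
        · simp [hc]; linarith
        · exact absurd ⟨rfl, rfl⟩ hne
    · have hd2' : (2:ℝ) ≤ d := by exact_mod_cast hd2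
      simp only [hc]
      nlinarith
  -- step 2: sum of closed forms over ν
  have step2 : ∀ d ∈ Finset.Icc 1 n, (∑ ν ∈ Finset.range (d+1), t' d ν)
      = (n.choose d : ℝ) * (1 - Real.exp (-T/θ)) ^ d * Real.exp (-((n:ℝ) - d) * T / θ) := by
    intro d hd
    rw [Finset.mem_Icc] at hd
    have hsplit : (∑ ν ∈ Finset.range (d+1), t' d ν)
        = (∑ ν ∈ Finset.range (d+1), A d ν)
          - ∑ ν ∈ Finset.range (d+1),
              A d ν * Real.exp (-(X d ν)) * ∑ k ∈ Finset.range d, (X d ν) ^ k / k.factorial := by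
      rw [← Finset.sum_sub_distrib]
      refine Finset.sum_congr rfl fun ν _ => ?_
      simp only [ht']; ring
    rw [hsplit]
    have hAsum : (∑ ν ∈ Finset.range (d+1), A d ν)
        = (n.choose d : ℝ) * (1 - Real.exp (-T/θ)) ^ d * Real.exp (-((n:ℝ) - d) * T / θ) := by
      have hbin : (-Real.exp (-T/θ) + 1) ^ d
          = ∑ ν ∈ Finset.range (d+1), (-Real.exp (-T/θ))^ν * (1:ℝ)^(d-ν) * (d.choose ν) :=
        add_pow (-Real.exp (-T/θ)) 1 d
      have : (1 - Real.exp (-T/θ)) ^ d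
          = ∑ ν ∈ Finset.range (d+1), (-1:ℝ)^ν * (d.choose ν) * Real.exp (-T/θ)^ν := by
        rw [show (1 - Real.exp (-T/θ)) = (-Real.exp (-T/θ) + 1) by ring, hbin]
        refine Finset.sum_congr rfl fun ν _ => ?_
        rw [neg_pow]
        ring
      rw [this, Finset.mul_sum, Finset.sum_mul]
      refine Finset.sum_congr rfl fun ν _ => ?_
      have hexp : Real.exp (-(((n:ℝ) - d + ν)) * T / θ)
          = Real.exp (-T/θ)^ν * Real.exp (-((n:ℝ) - d) * T / θ) := by
        rw [← Real.exp_nat_mul, ← Real.exp_add]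
        congr 1
        field_simp
        ring
      simp only [hA]
      rw [hexp]
      ring
    have hBsum : (∑ ν ∈ Finset.range (d+1),
        A d ν * Real.exp (-(X d ν)) * ∑ k ∈ Finset.range d, (X d ν) ^ k / k.factorial) = 0 := by
      have hAe : ∀ ν : ℕ, A d ν * Real.exp (-(X d ν))
          = (-1:ℝ)^ν * (n.choose d) * (d.choose ν)
            * Real.exp (-((d:ℝ) * ((n:ℝ) - 1 + u)) * a) := by
        intro ν
        have hexp2 : Real.exp (-(((n:ℝ) - d + ν)) * T / θ) * Real.exp (-(X d ν))
            = Real.exp (-((d:ℝ) * ((n:ℝ) - 1 + u)) * a) := by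
          rw [← Real.exp_add]
          congr 1
          rw [hX]
          simp only [hc, ha']
          field_simp
          ring
        simp only [hA]
        rw [mul_assoc, hexp2]
      calc (∑ ν ∈ Finset.range (d+1),
              A d ν * Real.exp (-(X d ν)) * ∑ k ∈ Finset.range d, (X d ν) ^ k / k.factorial)
          = ∑ ν ∈ Finset.range (d+1), ∑ k ∈ Finset.range d,
              ((n.choose d : ℝ) * Real.exp (-((d:ℝ) * ((n:ℝ) - 1 + u)) * a) * (a^k / k.factorial))
                * ((-1:ℝ)^ν * (d.choose ν) * (c d - ν)^k) := by
            refine Finset.sum_congr rfl fun ν _ => ?_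
            rw [hAe ν, Finset.mul_sum]
            refine Finset.sum_congr rfl fun k _ => ?_
            rw [hX, mul_pow]
            ring
        _ = ∑ k ∈ Finset.range d,
              ((n.choose d : ℝ) * Real.exp (-((d:ℝ) * ((n:ℝ) - 1 + u)) * a) * (a^k / k.factorial))
                * ∑ ν ∈ Finset.range (d+1), ((-1:ℝ)^ν * (d.choose ν) * (c d - ν)^k) := by
            rw [Finset.sum_comm]
            refine Finset.sum_congr rfl fun k _ => ?_
            rw [Finset.mul_sum]
        _ = 0 := by
            refine Finset.sum_eq_zero fun k hk => ?_
            rw [alt_sum_choose_pow (c d) (Finset.mem_range.mp hk), mul_zero]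
    rw [hAsum, hBsum, sub_zero]
  -- step 1: relate actual sum with closed-form sum
  have step1 : ∀ d ∈ Finset.Icc 1 n,
      (∑ ν ∈ Finset.range (d + 1),
        (-1:ℝ) ^ ν * (n.choose d) * (d.choose ν) * Real.exp (-(((n:ℝ) - d + ν)) * T / θ) *
          gammaCDF (X d ν) d)
      = (∑ ν ∈ Finset.range (d+1), t' d ν) - (if d = 1 then t' 1 1 else 0) := by
    intro d hd
    rw [Finset.mem_Icc] at hd
    rcases eq_or_ne d 1 with rfl | hd1
    · rw [if_pos rfl]
      rw [Finset.sum_range_succ, Finset.sum_range_succ, Finset.sum_range_zero, zero_add,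
        Finset.sum_range_succ, Finset.sum_range_succ, Finset.sum_range_zero, zero_add]
      have h10 : gammaCDF (X 1 0) 1
          = 1 - Real.exp (-(X 1 0)) * ∑ k ∈ Finset.range 1, (X 1 0) ^ k / k.factorial :=
        gammaCDF_eq (le_of_lt (hXpos 1 le_rfl hd.2 0 (by norm_num) (by simp))) le_rfl
      have h11 : gammaCDF (X 1 1) 1 = 0 := by
        apply gammaCDF_nonpos
        rw [hX]
        have : c 1 - ((1:ℕ):ℝ) = u - 1 := by simp only [hc]; push_cast; ring
        rw [this]
        nlinarith
      rw [h10, h11]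
      simp only [ht', hA]
      ring
    · simp only [if_neg hd1, sub_zero]
      refine Finset.sum_congr rfl fun ν hν => ?_
      have hgam : gammaCDF (X d ν) d
          = 1 - Real.exp (-(X d ν)) * ∑ k ∈ Finset.range d, (X d ν) ^ k / k.factorial :=
        gammaCDF_eq (le_of_lt (hXpos d hd.1 hd.2 ν (by have := Finset.mem_range.mp hν; omega)
          (fun h => hd1 h.1))) hd.1
      rw [hgam]
  -- t' 1 1 value
  have ht11 : t' 1 1 = (n:ℝ) * (Real.exp (-((n:ℝ) - 1 + u) * T / θ) - Real.exp (-(n:ℝ) * T / θ)) := by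
    simp only [ht', hA]
    have hX11 : X 1 1 = (u - 1) * a := by
      rw [hX]; simp only [hc]; push_cast; ring
    rw [hX11]
    simp only [Finset.sum_range_one, pow_zero, Nat.factorial_zero, Nat.cast_one, pow_one,
      Nat.choose_one_right, Nat.choose_self]
    have E1 : Real.exp (-(((n:ℝ) - 1 + 1)) * T / θ) * Real.exp (-((u - 1) * a))
        = Real.exp (-((n:ℝ) - 1 + u) * T / θ) := by
      rw [← Real.exp_add]
      congr 1
      simp only [ha']
      field_simp
      ring
    have E2 : Real.exp (-(((n:ℝ) - 1 + 1)) * T / θ) = Real.exp (-(n:ℝ) * T / θ) := by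
      congr 1
      ring
    linear_combination (n:ℝ) * E1 - (n:ℝ) * E2
  -- combine
  have hcast : ∀ d ν : ℕ, (((d:ℝ)) * (((n:ℝ) - 1 + u) * T) - ((n:ℝ) - d + ν) * T) / θ = X d ν := by
    intro d ν; rfl
  calc (∑ d ∈ Finset.Icc 1 n, ∑ ν ∈ Finset.range (d + 1),
      (-1:ℝ) ^ ν * (n.choose d) * (d.choose ν) * Real.exp (-(((n:ℝ) - d + ν)) * T / θ) *
        gammaCDF (((d:ℝ) * (((n:ℝ) - 1 + u) * T) - ((n:ℝ) - d + ν) * T) / θ) d)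
      = ∑ d ∈ Finset.Icc 1 n,
          ((∑ ν ∈ Finset.range (d+1), t' d ν) - (if d = 1 then t' 1 1 else 0)) := by
        refine Finset.sum_congr rfl fun d hd => ?_
        rw [← step1 d hd]
    _ = (∑ d ∈ Finset.Icc 1 n, ∑ ν ∈ Finset.range (d+1), t' d ν)
          - ∑ d ∈ Finset.Icc 1 n, (if d = 1 then t' 1 1 else 0) := Finset.sum_sub_distrib _ _
    _ = probDge n 1 T θ
          - (n:ℝ) * (Real.exp (-((n:ℝ) - 1 + u) * T / θ) - Real.exp (-(n:ℝ) * T / θ)) := by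
        congr 1
        · rw [probDge]
          exact Finset.sum_congr rfl step2
        · rw [Finset.sum_ite_eq' (Finset.Icc 1 n) 1 (fun _ => t' 1 1)]
          rw [if_pos (Finset.mem_Icc.mpr ⟨le_rfl, hn⟩), ht11]

lemma probDge_eq (hn : 1 ≤ n) (hT : 0 < T) (hθ : 0 < θ) :
    probDge n 1 T θ = 1 - Real.exp (-T/θ) ^ n := by
  set E := Real.exp (-T/θ) with hE
  have hterm : ∀ j ∈ Finset.Icc 1 n,
      (n.choose j : ℝ) * (1 - E) ^ j * Real.exp (-((n:ℝ) - j) * T / θ)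
        = (1 - E)^j * E^(n-j) * (n.choose j) := by
    intro j hj
    rw [Finset.mem_Icc] at hj
    have : Real.exp (-((n:ℝ) - j) * T / θ) = E ^ (n - j) := by
      rw [hE, ← Real.exp_nat_mul]
      congr 1
      have : ((n - j : ℕ) : ℝ) = (n:ℝ) - j := by
        have := hj.2; push_cast [Nat.cast_sub this]; ring
      rw [this]; field_simp
    rw [this]; ring
  rw [probDge, Finset.sum_congr rfl hterm]
  have hbin := add_pow (1 - E) E n
  have hfull : ∑ j ∈ Finset.range (n+1), (1-E)^j * E^(n-j) * (n.choose j) = 1 := by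
    rw [← hbin]; norm_num
  have hIcc : ∑ j ∈ Finset.Icc 1 n, (1-E)^j * E^(n-j) * (n.choose j)
      = ∑ i ∈ Finset.range n, (1-E)^(i+1) * E^(n-(i+1)) * (n.choose (i+1)) := by
    rw [show Finset.Icc 1 n = Finset.Ico 1 (n+1) by rw [Finset.Ico_add_one_right_eq_Icc],
      Finset.sum_Ico_eq_sum_range]
    simp only [Nat.add_sub_cancel]
    exact Finset.sum_congr rfl fun i _ => by rw [Nat.add_comm 1 i]
  rw [hIcc]
  rw [Finset.sum_range_succ'] at hfull
  simp only [pow_zero, Nat.sub_zero, Nat.choose_zero_right, Nat.cast_one, one_mul, mul_one] at hfull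
  linarith [hfull]

end Main

/-- Proposition 1: for u ∈ (0,1), the probability that θ(u,θ̂) is not defined,
namely P_θ{θ̂ ≥ (n−1+u)T | D ≥ 1} = 1 − F((n−1+u)T; θ | D ≥ 1), lies strictly
between 0 and 1 − u. -/
theorem prob_no_solution_bounds (n : ℕ) (hn : 1 ≤ n) (T : ℝ) (hT : 0 < T)
    (u : ℝ) (hu : u ∈ Set.Ioo (0:ℝ) 1) (θ : ℝ) (hθ : 0 < θ) :
    0 < 1 - condCDF_MLE n 1 T (((n:ℝ) - 1 + u) * T) θ ∧
      1 - condCDF_MLE n 1 T (((n:ℝ) - 1 + u) * T) θ < 1 - u := by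
  obtain ⟨hu0, hu1⟩ := hu
  have hnum : condCDF_MLE n 1 T (((n:ℝ) - 1 + u) * T) θ
      = (probDge n 1 T θ
          - (n:ℝ) * (Real.exp (-((n:ℝ) - 1 + u) * T / θ) - Real.exp (-(n:ℝ) * T / θ)))
        / probDge n 1 T θ := by
    rw [condCDF_MLE, numerator_eq hn hT hθ hu0 hu1]
  have hTθ : 0 < T / θ := div_pos hT hθ
  set E := Real.exp (-T/θ) with hE
  set b := Real.exp (-u*T/θ) with hb
  set P := probDge n 1 T θ with hPdef
  set R := (n:ℝ) * (Real.exp (-((n:ℝ) - 1 + u) * T / θ) - Real.exp (-(n:ℝ) * T / θ)) with hR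
  have hE0 : 0 < E := Real.exp_pos _
  have hE1 : E < 1 := by
    rw [hE, Real.exp_lt_one_iff]
    simp only [neg_div, neg_neg, neg_lt_zero]
    exact hTθ
  have hP : P = 1 - E ^ n := probDge_eq hn hT hθ
  have hPpos : 0 < P := by
    rw [hP]
    have : E ^ n < 1 := pow_lt_one₀ hE0.le hE1 (by omega)
    linarith
  have hb1 : Real.exp (-((n:ℝ) - 1 + u) * T / θ) = E ^ (n-1) * b := by
    rw [hE, hb, ← Real.exp_nat_mul, ← Real.exp_add]
    congr 1
    have hcast : ((n - 1 : ℕ) : ℝ) = (n:ℝ) - 1 := by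
      push_cast [Nat.cast_sub hn]
      ring
    rw [hcast]
    field_simp
    ring
  have hb2 : Real.exp (-(n:ℝ) * T / θ) = E ^ (n-1) * E := by
    rw [hE, ← Real.exp_nat_mul, ← Real.exp_add]
    congr 1
    have hcast : ((n - 1 : ℕ) : ℝ) = (n:ℝ) - 1 := by
      push_cast [Nat.cast_sub hn]
      ring
    rw [hcast]
    field_simp
    ring
  have hR' : R = (n:ℝ) * E ^ (n-1) * (b - E) := by
    rw [hR, hb1, hb2]
    ring
  have hEb : E < b := by
    rw [hE, hb]
    apply Real.exp_lt_exp.mpr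
    have h1 : (0:ℝ) < (1 - u) * (T/θ) := mul_pos (by linarith) hTθ
    have h2 : -u * T / θ = -(u * (T/θ)) := by ring
    have h3 : -T/θ = -(T/θ) := by ring
    rw [h2]
    nlinarith [h1]
  have hb_lt : b < u * E + (1 - u) := by
    have hcvx := strictConvexOn_exp.2 (Set.mem_univ (-T/θ)) (Set.mem_univ (0:ℝ))
      (by intro h; simp only [neg_div, neg_eq_zero] at h; linarith) hu0 (by linarith : (0:ℝ) < 1 - u) (by ring)
    simp only [smul_eq_mul, mul_zero, add_zero, Real.exp_zero, mul_one] at hcvx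
    have harg : u * (-T/θ) = -u * T / θ := by ring
    rw [harg] at hcvx
    rw [hb, hE]
    linarith [hcvx]
  have hnpos : (0:ℝ) < (n:ℝ) := by exact_mod_cast hn
  have hRpos : 0 < R := by
    rw [hR']
    exact mul_pos (mul_pos hnpos (pow_pos hE0 _)) (by linarith)
  have hgeom : (1 - E) * ∑ k ∈ Finset.range n, E ^ k = 1 - E ^ n := by
    linear_combination (-1 : ℝ) * geom_sum_mul E n
  have hsum_ge : (n:ℝ) * E ^ (n-1) ≤ ∑ k ∈ Finset.range n, E ^ k := by
    calc (n:ℝ) * E ^ (n-1) = ∑ _k ∈ Finset.range n, E ^ (n-1) := by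
          rw [Finset.sum_const, Finset.card_range, nsmul_eq_mul]
      _ ≤ ∑ k ∈ Finset.range n, E ^ k := by
          refine Finset.sum_le_sum fun k hk => ?_
          exact pow_le_pow_of_le_one hE0.le hE1.le (by have := Finset.mem_range.mp hk; omega)
  have hRP : R < (1 - u) * P := by
    have h1 : b - E < (1 - u) * (1 - E) := by nlinarith [hb_lt]
    have h2 : R < (1 - u) * ((n:ℝ) * E ^ (n-1) * (1 - E)) := by
      rw [hR']
      have := mul_pos hnpos (pow_pos hE0 (n-1))
      nlinarith [h1]
    have h3 : (n:ℝ) * E ^ (n-1) * (1 - E) ≤ 1 - E ^ n := by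
      rw [← hgeom]
      have h1E : (0:ℝ) ≤ 1 - E := by linarith
      calc (n:ℝ) * E ^ (n-1) * (1 - E) = (1 - E) * ((n:ℝ) * E ^ (n-1)) := by ring
        _ ≤ (1 - E) * ∑ k ∈ Finset.range n, E ^ k := by
            exact mul_le_mul_of_nonneg_left hsum_ge h1E
    rw [hP]
    nlinarith [h2, h3]
  have hmain : 1 - condCDF_MLE n 1 T (((n:ℝ) - 1 + u) * T) θ = R / P := by
    rw [hnum]
    field_simp
    ring
  rw [hmain]
  constructor
  · exact div_pos hRpos hPpos
  · rw [div_lt_iff₀ hPpos]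
    exact hRP
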